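/- Assume M is geodesic and let x = ((t_i,a_i,b_i))_{i=1}^n and x̂ = ((t̂_i,â_i,b̂_i))_{i=1}^n be dial-a-ride request sequences of the same length n. For every feasible pair (σ, T) for x̂ there exists a feasible pair (σ', T') for x with T' ≤ T + ε_time + 2·ε_pos; consequently Z_D(x) ≤ Z_D(x̂) + ε_time + 2·ε_pos. (Paper's dial-a-ride Lemma: Z^ALG ≤ Z'_{x̂} + ε_time + 2 ε_pos, proved by delaying the predicted route by ε_time and inserting detours of length 2·dist(â_i, a_i) at each predicted pickup and 2·dist(b̂_i, b_i) at each predicted delivery.) -/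

import Mathlib

/-- Feasibility of a pair `(σ, T)` for the dial-a-ride request sequence `x`: the schedule
is 1-Lipschitz, stays at the origin at all times `≤ 0`, ends at the origin at time `T`,
and for each request visits its pickup position (no earlier than its release time) and
afterwards its delivery position (uncapacitated server). -/
def FeasibleD {M : Type*} [MetricSpace M] (o : M) {n : ℕ} (x : Fin n → ℝ × M × M)
    (σ : ℝ → M) (T : ℝ) : Prop :=
  (LipschitzWith 1 σ ∧ ∀ s : ℝ, s ≤ 0 → σ s = o) ∧ 0 ≤ T ∧ σ T = o ∧
    ∀ i : Fin n, ∃ s u : ℝ, (x i).1 ≤ s ∧ s ≤ u ∧ u ≤ T ∧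
      σ s = (x i).2.1 ∧ σ u = (x i).2.2

/-- The optimal offline completion time of the dial-a-ride request sequence `x`. -/
noncomputable def ZD {M : Type*} [MetricSpace M] (o : M) {n : ℕ}
    (x : Fin n → ℝ × M × M) : ℝ :=
  sInf {T : ℝ | ∃ σ : ℝ → M, FeasibleD o x σ T}

/-- The optimal length of a closed dial-a-ride tour for `x`, ignoring release times. -/
noncomputable def LD {M : Type*} [MetricSpace M] (o : M) {n : ℕ}
    (x : Fin n → ℝ × M × M) : ℝ :=
  sInf {S : ℝ | 0 ≤ S ∧ ∃ γ : ℝ → M, LipschitzWith 1 γ ∧ γ 0 = o ∧ γ S = o ∧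
    ∀ i : Fin n, ∃ s u : ℝ, 0 ≤ s ∧ s ≤ u ∧ u ≤ S ∧
      γ s = (x i).2.1 ∧ γ u = (x i).2.2}

/-- `M` is geodesic: any two points are joined by a unit-speed geodesic. -/
def IsGeodesicSpace (M : Type*) [MetricSpace M] : Prop :=
  ∀ a b : M, ∃ γ : ℝ → M, LipschitzWith 1 γ ∧ γ 0 = a ∧ γ (dist a b) = b

private lemma lip_sub_const (c : ℝ) : LipschitzWith 1 (fun r : ℝ => r - c) := by
  apply LipschitzWith.of_dist_le_mul
  intro a b
  simp [Real.dist_eq]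

private lemma lip_tent (d : ℝ) : LipschitzWith 1 (fun r : ℝ => d - |r - d|) := by
  apply LipschitzWith.of_dist_le_mul
  intro a b
  simp only [NNReal.coe_one, one_mul, Real.dist_eq]
  have h : |(|a - d|) - (|b - d|)| ≤ |(a - d) - (b - d)| := abs_abs_sub_abs_le_abs_sub _ _
  have h2 : (a - d) - (b - d) = a - b := by ring
  rw [h2] at h
  have h3 : d - |a - d| - (d - |b - d|) = -(|a - d| - |b - d|) := by ring
  rw [h3, abs_neg]
  exact h

private lemma lip_glue {M : Type*} [MetricSpace M] {f g : ℝ → M} (c : ℝ)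
    (hf : LipschitzWith 1 f) (hg : LipschitzWith 1 g) (hfg : f c = g c) :
    LipschitzWith 1 (fun r => if r ≤ c then f r else g r) := by
  apply LipschitzWith.of_dist_le_mul
  intro r r'
  simp only [NNReal.coe_one, one_mul]
  have hfd : ∀ a b : ℝ, dist (f a) (f b) ≤ dist a b := fun a b => by
    simpa using hf.dist_le_mul a b
  have hgd : ∀ a b : ℝ, dist (g a) (g b) ≤ dist a b := fun a b => by
    simpa using hg.dist_le_mul a b
  rcases le_or_gt r c with h1 | h1 <;> rcases le_or_gt r' c with h2 | h2
  · simp only [if_pos h1, if_pos h2]; exact hfd r r'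
  · simp only [if_pos h1, if_neg (not_le.mpr h2)]
    calc dist (f r) (g r') ≤ dist (f r) (f c) + dist (f c) (g r') := dist_triangle _ _ _
      _ = dist (f r) (f c) + dist (g c) (g r') := by rw [hfg]
      _ ≤ dist r c + dist c r' := add_le_add (hfd r c) (hgd c r')
      _ ≤ dist r r' := by
          rw [Real.dist_eq, Real.dist_eq, Real.dist_eq,
            abs_of_nonpos (by linarith : r - c ≤ 0),
            abs_of_nonpos (by linarith : c - r' ≤ 0),
            abs_of_nonpos (by linarith : r - r' ≤ 0)]
          linarith
  · simp only [if_neg (not_le.mpr h1), if_pos h2]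
    calc dist (g r) (f r') ≤ dist (g r) (g c) + dist (g c) (f r') := dist_triangle _ _ _
      _ = dist (g r) (g c) + dist (f c) (f r') := by rw [hfg]
      _ ≤ dist r c + dist c r' := add_le_add (hgd r c) (hfd c r')
      _ ≤ dist r r' := by
          rw [Real.dist_eq, Real.dist_eq, Real.dist_eq,
            abs_of_nonneg (by linarith : (0:ℝ) ≤ r - c),
            abs_of_nonneg (by linarith : (0:ℝ) ≤ c - r'),
            abs_of_nonneg (by linarith : (0:ℝ) ≤ r - r')]
          linarith
  · simp only [if_neg (not_le.mpr h1), if_neg (not_le.mpr h2)]; exact hgd r r'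

private lemma detour_lemma {M : Type*} [MetricSpace M] (hgeo : IsGeodesicSpace M)
    (σ : ℝ → M) (hσ : LipschitzWith 1 σ) (s : ℝ) (p q : M) (hp : σ s = p) :
    ∃ σ₁ : ℝ → M, LipschitzWith 1 σ₁ ∧ (∀ r, r ≤ s → σ₁ r = σ r) ∧
      σ₁ (s + dist p q) = q ∧
      ∀ r, s ≤ r → σ₁ (r + 2 * dist p q) = σ r := by
  obtain ⟨γ, hγ, hγ0, hγd⟩ := hgeo p q
  set d := dist p q with hd
  have hd0 : (0:ℝ) ≤ d := dist_nonneg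
  set exc : ℝ → M := fun r => γ (d - |r - d|) with hexcdef
  have hexc : LipschitzWith 1 exc := by
    simpa [Function.comp_def] using hγ.comp (lip_tent d)
  have hexc0 : exc 0 = p := by
    show γ (d - |0 - d|) = p
    rw [zero_sub, abs_neg, abs_of_nonneg hd0, sub_self, hγ0]
  have hexcd : exc d = q := by
    show γ (d - |d - d|) = q
    rw [sub_self, abs_zero, sub_zero, hγd]
  have hexc2d : exc (2 * d) = p := by
    show γ (d - |2 * d - d|) = p
    have h2 : 2 * d - d = d := by ring
    rw [h2, abs_of_nonneg hd0, sub_self, hγ0]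
  have hg2lip : LipschitzWith 1 (fun r => if r ≤ s + 2 * d then exc (r - s) else σ (r - 2 * d)) := by
    apply lip_glue
    · simpa [Function.comp_def] using hexc.comp (lip_sub_const s)
    · simpa [Function.comp_def] using hσ.comp (lip_sub_const (2 * d))
    · have h1 : s + 2 * d - s = 2 * d := by ring
      have h2 : s + 2 * d - 2 * d = s := by ring
      show exc (s + 2 * d - s) = σ (s + 2 * d - 2 * d)
      rw [h1, h2, hexc2d, hp]
  refine ⟨fun r => if r ≤ s then σ r else
      if r ≤ s + 2 * d then exc (r - s) else σ (r - 2 * d), ?_, ?_, ?_, ?_⟩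
  · exact lip_glue s hσ hg2lip (by rw [if_pos (by linarith), sub_self, hexc0, hp])
  · intro r hr
    simp only [if_pos hr]
  · rcases hd0.eq_or_lt with h | h
    · have hq : p = q := dist_eq_zero.mp (by rw [← hd]; exact h.symm)
      have hsd : s + d = s := by rw [← h]; ring
      simp only [hsd, if_pos le_rfl, hp, hq]
    · have h1 : ¬ s + d ≤ s := by linarith
      have h2 : s + d ≤ s + 2 * d := by linarith
      simp only [if_neg h1, if_pos h2]
      have h3 : s + d - s = d := by ring
      rw [h3, hexcd]
  · intro r hr
    by_cases h1 : r + 2 * d ≤ s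
    · have hr2 : r = s := le_antisymm (by linarith) hr
      have hd2 : d = 0 := by linarith
      simp only [if_pos h1]
      congr 1
      rw [hd2]; ring
    · simp only [if_neg h1]
      by_cases h2 : r + 2 * d ≤ s + 2 * d
      · have hr2 : r = s := le_antisymm (by linarith) hr
        simp only [if_pos h2]
        have h3 : r + 2 * d - s = 2 * d := by rw [hr2]; ring
        rw [h3, hexc2d, hr2, hp]
      · simp only [if_neg h2]
        congr 1
        ring

private lemma aux_detours {M : Type*} [MetricSpace M] (o : M) (hgeo : IsGeodesicSpace M)
    {n : ℕ} (x : Fin n → ℝ × M × M) (pa pb : Fin n → M) (F : Finset (Fin n)) :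
    ∀ σ : ℝ → M, ∀ T : ℝ, LipschitzWith 1 σ → (∀ s : ℝ, s ≤ 0 → σ s = o) → 0 ≤ T → σ T = o →
      (∀ i : Fin n, ∃ s u : ℝ, (x i).1 ≤ s ∧ 0 ≤ s ∧ s ≤ u ∧ u ≤ T ∧
        σ s = (if i ∈ F then pa i else (x i).2.1) ∧
        σ u = (if i ∈ F then pb i else (x i).2.2)) →
      ∃ σ' T', FeasibleD o x σ' T' ∧
        T' ≤ T + 2 * ∑ i ∈ F, (dist (pa i) (x i).2.1 + dist (pb i) (x i).2.2) := by
  induction F using Finset.induction_on with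
  | empty =>
    intro σ T hlip hzero hT0 hTo hwit
    refine ⟨σ, T, ⟨⟨hlip, hzero⟩, hT0, hTo, ?_⟩, by simp⟩
    intro i
    obtain ⟨s, u, h1, h2, h3, h4, h5, h6⟩ := hwit i
    simp only [Finset.notMem_empty, if_false] at h5 h6
    exact ⟨s, u, h1, h3, h4, h5, h6⟩
  | @insert a F ha IH =>
    intro σ T hlip hzero hT0 hTo hwit
    obtain ⟨s, u, hts, hs0, hsu, huT, hps, hpu⟩ := hwit a
    rw [if_pos (Finset.mem_insert_self a F)] at hps hpu
    obtain ⟨σ₁, h₁lip, h₁agree, h₁mid, h₁shift⟩ :=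
      detour_lemma hgeo σ hlip s (pa a) (x a).2.1 hps
    have hdA : (0:ℝ) ≤ dist (pa a) (x a).2.1 := dist_nonneg
    have hdB : (0:ℝ) ≤ dist (pb a) (x a).2.2 := dist_nonneg
    have hσ₁u : σ₁ (u + 2 * dist (pa a) (x a).2.1) = pb a := by
      rw [h₁shift u hsu, hpu]
    obtain ⟨σ₂, h₂lip, h₂agree, h₂mid, h₂shift⟩ :=
      detour_lemma hgeo σ₁ h₁lip (u + 2 * dist (pa a) (x a).2.1) (pb a) (x a).2.2 hσ₁u
    set dA := dist (pa a) (x a).2.1 with hdAdef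
    set dB := dist (pb a) (x a).2.2 with hdBdef
    have key : ∀ r : ℝ,
        σ₂ (if r < s then r else if r < u then r + 2*dA else r + 2*dA + 2*dB) = σ r := by
      intro r
      by_cases h1 : r < s
      · rw [if_pos h1, h₂agree r (by linarith), h₁agree r (le_of_lt h1)]
      · rw [if_neg h1]
        push_neg at h1
        by_cases h2 : r < u
        · rw [if_pos h2, h₂agree _ (by linarith), h₁shift r h1]
        · rw [if_neg h2, h₂shift _ (by linarith), h₁shift r h1]
    have hz₂ : ∀ r : ℝ, r ≤ 0 → σ₂ r = o := by
      intro r hr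
      rw [h₂agree r (by linarith), h₁agree r (by linarith), hzero r hr]
    have hTo₂ : σ₂ (T + 2*dA + 2*dB) = o := by
      rw [h₂shift (T + 2*dA) (by linarith), h₁shift T (by linarith), hTo]
    have hwit₂ : ∀ i : Fin n, ∃ s' u' : ℝ, (x i).1 ≤ s' ∧ 0 ≤ s' ∧ s' ≤ u' ∧
        u' ≤ T + 2*dA + 2*dB ∧
        σ₂ s' = (if i ∈ F then pa i else (x i).2.1) ∧
        σ₂ u' = (if i ∈ F then pb i else (x i).2.2) := by
      intro i
      by_cases hia : i = a
      · subst hia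
        refine ⟨s + dA, u + 2*dA + dB, by linarith, by linarith, by linarith, by linarith, ?_, ?_⟩
        · rw [if_neg ha, h₂agree _ (by linarith)]
          exact h₁mid
        · rw [if_neg ha]
          exact h₂mid
      · obtain ⟨si, ui, g1, g2, g3, g4, g5, g6⟩ := hwit i
        simp only [Finset.mem_insert, hia, false_or] at g5 g6
        refine ⟨if si < s then si else if si < u then si + 2*dA else si + 2*dA + 2*dB,
                if ui < s then ui else if ui < u then ui + 2*dA else ui + 2*dA + 2*dB,
                ?_, ?_, ?_, ?_, ?_, ?_⟩
        · split_ifs <;> linarith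
        · split_ifs <;> linarith
        · split_ifs <;> linarith
        · split_ifs <;> linarith
        · rw [key si]; exact g5
        · rw [key ui]; exact g6
    obtain ⟨σ', T', hfeas, hle⟩ :=
      IH σ₂ (T + 2*dA + 2*dB) h₂lip hz₂ (by linarith) hTo₂ hwit₂
    refine ⟨σ', T', hfeas, ?_⟩
    rw [Finset.sum_insert ha, ← hdAdef, ← hdBdef]
    linarith

private lemma exists_feasibleD {M : Type*} [MetricSpace M] (o : M) (hgeo : IsGeodesicSpace M)
    {n : ℕ} (x : Fin n → ℝ × M × M) (hx : ∀ i, 0 ≤ (x i).1) :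
    ∃ σ T, FeasibleD o x σ T := by
  have hconst : LipschitzWith 1 (fun _ : ℝ => o) :=
    LipschitzWith.of_dist_le_mul (fun a b => by simp [dist_nonneg])
  have hR0 : 0 ≤ ∑ j, (x j).1 := Finset.sum_nonneg fun j _ => hx j
  obtain ⟨σ', T', hfeas, _⟩ := aux_detours o hgeo x (fun _ => o) (fun _ => o) Finset.univ
    (fun _ => o) (∑ j, (x j).1) hconst (fun _ _ => rfl) hR0 rfl
    (fun i => ⟨∑ j, (x j).1, ∑ j, (x j).1,
      Finset.single_le_sum (fun j _ => hx j) (Finset.mem_univ i), hR0, le_rfl, le_rfl,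
      by simp, by simp⟩)
  exact ⟨σ', T', hfeas⟩

/-- From any feasible pair for the predicted dial-a-ride instance `x̂` one obtains a
feasible pair for the actual instance `x` at an extra cost of `ε_time + 2 ε_pos`;
consequently `Z_D(x) ≤ Z_D(x̂) + ε_time + 2 ε_pos`. -/
theorem darp_actual_le_predicted {M : Type*} [MetricSpace M] (o : M)
    (hgeo : IsGeodesicSpace M) {n : ℕ}
    (x xh : Fin n → ℝ × M × M) (hx : ∀ i, 0 ≤ (x i).1) (hxh : ∀ i, 0 ≤ (xh i).1) :
    (∀ σ T, FeasibleD o xh σ T →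
      ∃ σ' T', FeasibleD o x σ' T' ∧
        T' ≤ T + (⨆ i, |(xh i).1 - (x i).1|) +
          2 * ∑ i, (dist (xh i).2.1 (x i).2.1 + dist (xh i).2.2 (x i).2.2)) ∧
    ZD o x ≤ ZD o xh + (⨆ i, |(xh i).1 - (x i).1|) +
      2 * ∑ i, (dist (xh i).2.1 (x i).2.1 + dist (xh i).2.2 (x i).2.2) := by
  have hbdd : BddAbove (Set.range fun i : Fin n => |(xh i).1 - (x i).1|) :=
    Set.Finite.bddAbove (Set.finite_range _)
  have hε0 : 0 ≤ ⨆ i, |(xh i).1 - (x i).1| := by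
    cases isEmpty_or_nonempty (Fin n) with
    | inl h => rw [Real.iSup_of_isEmpty]
    | inr h => exact le_trans (abs_nonneg _) (le_ciSup hbdd (Classical.arbitrary _))
  set ε := ⨆ i, |(xh i).1 - (x i).1| with hεdef
  have hεi : ∀ i, |(xh i).1 - (x i).1| ≤ ε := fun i => le_ciSup hbdd i
  have part1 : ∀ σ T, FeasibleD o xh σ T →
      ∃ σ' T', FeasibleD o x σ' T' ∧
        T' ≤ T + ε + 2 * ∑ i, (dist (xh i).2.1 (x i).2.1 + dist (xh i).2.2 (x i).2.2) := by
    intro σ T hfeas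
    obtain ⟨⟨hlip, hzero⟩, hT0, hTo, hwit⟩ := hfeas
    have h1 : LipschitzWith 1 (fun r => σ (r - ε)) := by
      simpa [Function.comp_def] using hlip.comp (lip_sub_const ε)
    have h2 : ∀ r : ℝ, r ≤ 0 → (fun r => σ (r - ε)) r = o :=
      fun r hr => hzero _ (by linarith)
    have h3 : (fun r => σ (r - ε)) (T + ε) = o := by
      show σ (T + ε - ε) = o
      rw [add_sub_cancel_right]; exact hTo
    have h4 : ∀ i : Fin n, ∃ s u : ℝ, (x i).1 ≤ s ∧ 0 ≤ s ∧ s ≤ u ∧ u ≤ T + ε ∧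
        (fun r => σ (r - ε)) s = (if i ∈ Finset.univ then (fun j => (xh j).2.1) i else (x i).2.1) ∧
        (fun r => σ (r - ε)) u = (if i ∈ Finset.univ then (fun j => (xh j).2.2) i else (x i).2.2) := by
      intro i
      obtain ⟨si, ui, g1, g2, g3, g4, g5⟩ := hwit i
      have habs : -((xh i).1 - (x i).1) ≤ |(xh i).1 - (x i).1| := neg_le_abs _
      refine ⟨si + ε, ui + ε, by linarith [hεi i], by linarith [hxh i], by linarith,
        by linarith, ?_, ?_⟩
      · rw [if_pos (Finset.mem_univ i)]
        show σ (si + ε - ε) = (xh i).2.1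
        rw [add_sub_cancel_right]; exact g4
      · rw [if_pos (Finset.mem_univ i)]
        show σ (ui + ε - ε) = (xh i).2.2
        rw [add_sub_cancel_right]; exact g5
    obtain ⟨σ', T', hfeas', hle⟩ := aux_detours o hgeo x (fun j => (xh j).2.1)
      (fun j => (xh j).2.2) Finset.univ (fun r => σ (r - ε)) (T + ε) h1 h2
      (by linarith) h3 h4
    exact ⟨σ', T', hfeas', hle⟩
  refine ⟨part1, ?_⟩
  obtain ⟨σ₀, T₀, hfeas₀⟩ := exists_feasibleD o hgeo xh hxh
  have hne : Set.Nonempty {T : ℝ | ∃ σ, FeasibleD o xh σ T} := ⟨T₀, σ₀, hfeas₀⟩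
  have hbb : BddBelow {T : ℝ | ∃ σ, FeasibleD o x σ T} := by
    refine ⟨0, fun T hT => ?_⟩
    obtain ⟨σ, hf⟩ := hT
    exact hf.2.1
  simp only [ZD]
  have hkey : ∀ T ∈ {T : ℝ | ∃ σ, FeasibleD o xh σ T},
      sInf {T : ℝ | ∃ σ, FeasibleD o x σ T} -
        (ε + 2 * ∑ i, (dist (xh i).2.1 (x i).2.1 + dist (xh i).2.2 (x i).2.2)) ≤ T := by
    intro T hT
    obtain ⟨σ, hf⟩ := hT
    obtain ⟨σ', T', hf', hle⟩ := part1 σ T hf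
    have h5 : sInf {T : ℝ | ∃ σ, FeasibleD o x σ T} ≤ T' := csInf_le hbb ⟨σ', hf'⟩
    linarith
  have := le_csInf hne hkey
  linarith
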